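/- Let x ∈ [0,1/2) and λ ≥ 2, and set θ₀ = 1 - 2/λ and A = 1 - 1/(λ(1-x)). Then θ₀(1 + λθ₀) > A if and only if λ > 2 + √(2 - 1/(1-x)). -/

import Mathlib

/-- **Eradication threshold condition.** For `x ∈ [0,1/2)` and `λ ≥ 2`, with
`θ₀ = 1 - 2/λ` and `A = 1 - 1/(λ(1-x))`, the inequality `θ₀(1 + λθ₀) > A` holds iff
`λ > 2 + √(2 - 1/(1-x))`. -/
theorem eradication_threshold (lam x : ℝ) (hx : x ∈ Set.Ico (0 : ℝ) (1 / 2))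
    (hlam : 2 ≤ lam) :
    (1 - 1 / (lam * (1 - x))) < (1 - 2 / lam) * (1 + lam * (1 - 2 / lam)) ↔
      2 + Real.sqrt (2 - 1 / (1 - x)) < lam := by
  obtain ⟨hx0, hx1⟩ := hx
  have h1 : (0:ℝ) < 1 - x := by linarith
  have hlam0 : (0:ℝ) < lam := by linarith
  have hc : (0:ℝ) ≤ 2 - 1 / (1 - x) := by
    rw [sub_nonneg, div_le_iff₀ h1]; linarith
  set s := Real.sqrt (2 - 1 / (1 - x)) with hs
  have hs0 : 0 ≤ s := Real.sqrt_nonneg _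
  have hs2 : s ^ 2 = 2 - 1 / (1 - x) := Real.sq_sqrt hc
  have hs2' : s ^ 2 * (1 - x) = 2 * (1 - x) - 1 := by
    rw [hs2]; field_simp
  have expand : (1 - 2 / lam) * (1 + lam * (1 - 2 / lam)) - (1 - 1 / (lam * (1 - x)))
      = ((lam - 2) ^ 2 * (1 - x) - (2 * (1 - x) - 1)) / (lam * (1 - x)) := by
    field_simp
    ring
  have key : (1 - 1 / (lam * (1 - x))) < (1 - 2 / lam) * (1 + lam * (1 - 2 / lam)) ↔
      2 * (1 - x) - 1 < (lam - 2) ^ 2 * (1 - x) := by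
    rw [← sub_pos, expand, lt_div_iff₀ (by positivity), zero_mul, sub_pos]
  rw [key]
  constructor
  · intro h
    have h2 : s ^ 2 < (lam - 2) ^ 2 := by
      rw [← mul_lt_mul_iff_of_pos_right h1, hs2']; exact h
    nlinarith [sq_nonneg (lam - 2 + s)]
  · intro h
    have h2 : s ^ 2 < (lam - 2) ^ 2 := by nlinarith
    rw [← hs2', mul_lt_mul_iff_of_pos_right h1]; exact h2
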